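/- The Lie algebras g⁰ and g¹ are not isomorphic. More precisely, g⁰ and g¹ are 6-dimensional nilpotent Lie algebras with brackets as specified, and there is no Lie algebra isomorphism between them (for instance, the center of g⁰ is strictly larger than the center of g¹, or the derived subalgebra of g¹ contains an element arising from a bracket of two elements of the derived-series filtration not present in g⁰). -/

import Mathlib

/-- The Lie algebras `g⁰` and `g¹` are not isomorphic: if `L₀` has a basis `e`
with nonzero brackets exactly `⁅e₁,e₃⁆=e₄, ⁅e₂,e₃⁆=e₅, ⁅e₂,e₅⁆=e₇` and `L₁` has a
basis `f` with the same brackets plus `⁅f₃,f₄⁆=f₇`, then there is no Lie algebra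
isomorphism `L₀ ≃ L₁`. (Indices: `e 0,…,e 4, e 5` stand for `e₁,…,e₅,e₇`.) -/
theorem stmt_6 (L₀ L₁ : Type*) [LieRing L₀] [LieAlgebra ℝ L₀]
    [LieRing L₁] [LieAlgebra ℝ L₁] (e : Fin 6 → L₀) (f : Fin 6 → L₁)
    (he : LinearIndependent ℝ e) (hes : Submodule.span ℝ (Set.range e) = ⊤)
    (hf : LinearIndependent ℝ f) (hfs : Submodule.span ℝ (Set.range f) = ⊤)
    (he13 : ⁅e 0, e 2⁆ = e 3) (he23 : ⁅e 1, e 2⁆ = e 4) (he25 : ⁅e 1, e 4⁆ = e 5)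
    (he12 : ⁅e 0, e 1⁆ = 0) (he14 : ⁅e 0, e 3⁆ = 0) (he15 : ⁅e 0, e 4⁆ = 0)
    (he17 : ⁅e 0, e 5⁆ = 0) (he24 : ⁅e 1, e 3⁆ = 0) (he27 : ⁅e 1, e 5⁆ = 0)
    (he34 : ⁅e 2, e 3⁆ = 0) (he35 : ⁅e 2, e 4⁆ = 0) (he37 : ⁅e 2, e 5⁆ = 0)
    (he45 : ⁅e 3, e 4⁆ = 0) (he47 : ⁅e 3, e 5⁆ = 0) (he57 : ⁅e 4, e 5⁆ = 0)
    (hf13 : ⁅f 0, f 2⁆ = f 3) (hf23 : ⁅f 1, f 2⁆ = f 4) (hf25 : ⁅f 1, f 4⁆ = f 5)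
    (hf34 : ⁅f 2, f 3⁆ = f 5)
    (hf12 : ⁅f 0, f 1⁆ = 0) (hf14 : ⁅f 0, f 3⁆ = 0) (hf15 : ⁅f 0, f 4⁆ = 0)
    (hf17 : ⁅f 0, f 5⁆ = 0) (hf24 : ⁅f 1, f 3⁆ = 0) (hf27 : ⁅f 1, f 5⁆ = 0)
    (hf35 : ⁅f 2, f 4⁆ = 0) (hf37 : ⁅f 2, f 5⁆ = 0)
    (hf45 : ⁅f 3, f 4⁆ = 0) (hf47 : ⁅f 3, f 5⁆ = 0) (hf57 : ⁅f 4, f 5⁆ = 0) :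
    IsEmpty (L₀ ≃ₗ⁅ℝ⁆ L₁) := by
  constructor
  intro φ
  -- skew versions of the brackets we need
  have h20 : ⁅f 2, f 0⁆ = -f 3 := by rw [← lie_skew, hf13]
  have h21 : ⁅f 2, f 1⁆ = -f 4 := by rw [← lie_skew, hf23]
  have h41 : ⁅f 4, f 1⁆ = -f 5 := by rw [← lie_skew, hf25]
  have h32 : ⁅f 3, f 2⁆ = -f 5 := by rw [← lie_skew, hf34]
  have h10 : ⁅f 1, f 0⁆ = 0 := by rw [← lie_skew, hf12, neg_zero]
  have h30 : ⁅f 3, f 0⁆ = 0 := by rw [← lie_skew, hf14, neg_zero]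
  have h40 : ⁅f 4, f 0⁆ = 0 := by rw [← lie_skew, hf15, neg_zero]
  have h50 : ⁅f 5, f 0⁆ = 0 := by rw [← lie_skew, hf17, neg_zero]
  have h31 : ⁅f 3, f 1⁆ = 0 := by rw [← lie_skew, hf24, neg_zero]
  have h51 : ⁅f 5, f 1⁆ = 0 := by rw [← lie_skew, hf27, neg_zero]
  have h42 : ⁅f 4, f 2⁆ = 0 := by rw [← lie_skew, hf35, neg_zero]
  have h52 : ⁅f 5, f 2⁆ = 0 := by rw [← lie_skew, hf37, neg_zero]
  -- e 3 and e 5 are central in L₀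
  have hcentral : ∀ x : L₀, (∀ i : Fin 6, ⁅x, e i⁆ = 0) → ∀ y : L₀, ⁅x, y⁆ = 0 := by
    intro x hx y
    have hy : y ∈ Submodule.span ℝ (Set.range e) := hes ▸ Submodule.mem_top
    induction hy using Submodule.span_induction with
    | mem z hz => obtain ⟨i, rfl⟩ := hz; exact hx i
    | zero => simp
    | add a b _ _ ha hb => rw [lie_add, ha, hb, add_zero]
    | smul t a _ ha => rw [lie_smul, ha, smul_zero]
  have hc3 : ∀ y : L₀, ⁅e 3, y⁆ = 0 := by
    apply hcentral
    intro i
    fin_cases i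
    · show ⁅e 3, e 0⁆ = 0; rw [← lie_skew, he14, neg_zero]
    · show ⁅e 3, e 1⁆ = 0; rw [← lie_skew, he24, neg_zero]
    · show ⁅e 3, e 2⁆ = 0; rw [← lie_skew, he34, neg_zero]
    · show ⁅e 3, e 3⁆ = 0; exact lie_self _
    · show ⁅e 3, e 4⁆ = 0; exact he45
    · show ⁅e 3, e 5⁆ = 0; exact he47
  have hc5 : ∀ y : L₀, ⁅e 5, y⁆ = 0 := by
    apply hcentral
    intro i
    fin_cases i
    · show ⁅e 5, e 0⁆ = 0; rw [← lie_skew, he17, neg_zero]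
    · show ⁅e 5, e 1⁆ = 0; rw [← lie_skew, he27, neg_zero]
    · show ⁅e 5, e 2⁆ = 0; rw [← lie_skew, he37, neg_zero]
    · show ⁅e 5, e 3⁆ = 0; rw [← lie_skew, he47, neg_zero]
    · show ⁅e 5, e 4⁆ = 0; rw [← lie_skew, he57, neg_zero]
    · show ⁅e 5, e 5⁆ = 0; exact lie_self _
  -- φ maps central elements to central elements
  have hmap : ∀ x : L₀, (∀ y : L₀, ⁅x, y⁆ = 0) → ∀ z : L₁, ⁅φ x, z⁆ = 0 := by
    intro x hx z
    have h1 : z = φ (φ.symm z) := (φ.apply_symm_apply z).symm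
    have h2 : φ (0 : L₀) = 0 := φ.toLinearEquiv.map_zero
    rw [h1, ← φ.map_lie, hx, h2]
  -- independence helpers
  have hindf : ∀ g : Fin 6 → ℝ, (∑ i, g i • f i) = 0 → ∀ i, g i = 0 :=
    Fintype.linearIndependent_iff.mp hf
  have hinde : ∀ g : Fin 6 → ℝ, (∑ i, g i • e i) = 0 → ∀ i, g i = 0 :=
    Fintype.linearIndependent_iff.mp he
  have keyf : ∀ u v w : ℝ, u • f 3 + v • f 4 + w • f 5 = 0 → u = 0 ∧ v = 0 ∧ w = 0 := by
    intro u v w h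
    have hs : (∑ i, (![0, 0, 0, u, v, w] : Fin 6 → ℝ) i • f i) = 0 := by
      rw [Fin.sum_univ_six]
      show (0:ℝ) • f 0 + (0:ℝ) • f 1 + (0:ℝ) • f 2 + u • f 3 + v • f 4 + w • f 5 = 0
      simpa using h
    exact ⟨hindf _ hs 3, hindf _ hs 4, hindf _ hs 5⟩
  have keye : ∀ u w : ℝ, u • e 3 + w • e 5 = 0 → u = 0 ∧ w = 0 := by
    intro u w h
    have hs : (∑ i, (![0, 0, 0, u, 0, w] : Fin 6 → ℝ) i • e i) = 0 := by
      rw [Fin.sum_univ_six]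
      show (0:ℝ) • e 0 + (0:ℝ) • e 1 + (0:ℝ) • e 2 + u • e 3 + (0:ℝ) • e 4 + w • e 5 = 0
      simpa using h
    exact ⟨hinde _ hs 3, hinde _ hs 5⟩
  have hf' : ⊤ ≤ Submodule.span ℝ (Set.range f) := hfs.ge
  let b : Module.Basis (Fin 6) ℝ L₁ := Module.Basis.mk hf hf'
  have hb : ∀ i, b i = f i := fun i => Module.Basis.mk_apply hf hf' i
  -- a central element of L₁ is a multiple of f 5
  have hcen1 : ∀ z : L₁, (∀ w : L₁, ⁅z, w⁆ = 0) → ∃ a : ℝ, z = a • f 5 := by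
    intro z hz
    set c : Fin 6 → ℝ := fun i => b.repr z i with hc
    have hzr : (∑ i, c i • f i) = z := by
      have h1 := b.sum_repr z
      simpa [hb, hc] using h1
    have E2 : c 0 • f 3 + c 1 • f 4 + -(c 3) • f 5 = 0 := by
      have h := hz (f 2)
      rw [← hzr, Fin.sum_univ_six] at h
      simp only [add_lie, smul_lie, lie_self, h32, h42, h52, hf13, hf23,
        smul_zero, smul_neg, add_zero, zero_add, neg_smul] at h
      linear_combination (norm := module) h
    obtain ⟨hc0, hc1, hc3'⟩ := keyf _ _ _ E2
    have hc3'' : c 3 = 0 := by linarith [neg_eq_zero.mp hc3']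
    have F0 : -(c 2) • f 3 + (0:ℝ) • f 4 + (0:ℝ) • f 5 = 0 := by
      have h := hz (f 0)
      rw [← hzr, Fin.sum_univ_six] at h
      simp only [add_lie, smul_lie, lie_self, h10, h20, h30, h40, h50,
        smul_zero, smul_neg, add_zero, zero_add, neg_smul] at h
      linear_combination (norm := module) h
    have hc2 : c 2 = 0 := by
      have := (keyf _ _ _ F0).1
      linarith [neg_eq_zero.mp this]
    have F1 : (0:ℝ) • f 3 + -(c 2) • f 4 + -(c 4) • f 5 = 0 := by
      have h := hz (f 1)
      rw [← hzr, Fin.sum_univ_six] at h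
      simp only [add_lie, smul_lie, lie_self, h21, h31, h41, h51, hf12,
        smul_zero, smul_neg, add_zero, zero_add, neg_smul] at h
      linear_combination (norm := module) h
    have hc4 : c 4 = 0 := by
      have := (keyf _ _ _ F1).2.2
      linarith [neg_eq_zero.mp this]
    refine ⟨c 5, ?_⟩
    rw [← hzr, Fin.sum_univ_six, hc0, hc1, hc2, hc3'', hc4]
    simp
  -- conclude
  obtain ⟨a, ha⟩ := hcen1 (φ (e 3)) (hmap _ hc3)
  obtain ⟨a', ha'⟩ := hcen1 (φ (e 5)) (hmap _ hc5)
  have hψ : ∀ x : L₀, φ x = φ.toLinearEquiv x := fun _ => rfl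
  have hker : φ.toLinearEquiv (a' • e 3 + -a • e 5) = 0 := by
    rw [map_add, map_smul, map_smul, ← hψ, ← hψ, ha, ha', smul_smul, smul_smul, ← add_smul]
    have hz0 : a' * a + -a * a' = 0 := by ring
    rw [hz0, zero_smul]
  have hzero : a' • e 3 + -a • e 5 = 0 := by
    apply φ.toLinearEquiv.injective
    rw [hker, map_zero]
  obtain ⟨ha'0, ha0⟩ := keye _ _ hzero
  have ha0' : a = 0 := by linarith [neg_eq_zero.mp ha0]
  have he3 : e 3 = 0 := by
    apply φ.toLinearEquiv.injective
    rw [map_zero, ← hψ, ha, ha0', zero_smul]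
  exact he.ne_zero 3 he3
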